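/- Let X be a finite random variable with distribution p_X, randomly and independently binned via uniform random maps B₁ : 𝒳 → [1,M̃] and B₂ : 𝒳 → [1,C̃] (each B₁(x), B₂(x) uniform and independent across x). Let P_{MC} denote the induced (random) joint distribution of M = B₁(X), C = B₂(X). For γ > 0 let D_γ = {x : log₂(1/p_X(x)) > γ}. Then E_B[ 𝕍(P_{MC}, p_M^U × p_C^U) ] ≤ P(X ∉ D_γ) + (1/2)·√(M̃·C̃·2^{−γ}), where 𝕍 is total variation distance and p_M^U, p_C^U are uniform distributions. -/

import Mathlib

set_option maxHeartbeats 1000000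


open Finset

section Helpers

variable {α : Type*} [Fintype α] [DecidableEq α]

lemma sum_apply_one {M : ℕ} (x : α) (F : Fin M → ℝ) :
    ∑ g : α → Fin M, F (g x) = (Fintype.card ({j : α // j ≠ x} → Fin M) : ℝ) * ∑ v, F v := by
  classical
  rw [← Equiv.sum_comp (Equiv.funSplitAt x (Fin M)).symm (fun g => F (g x))]
  have h : ∀ p : Fin M × ({j : α // j ≠ x} → Fin M),
      F (((Equiv.funSplitAt x (Fin M)).symm p) x) = F p.1 := by
    intro p
    congr 1
    simp [Equiv.funSplitAt, Equiv.piSplitAt]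
  rw [Fintype.sum_congr _ _ h, Fintype.sum_prod_type]
  simp [Finset.sum_const, mul_comm, Finset.mul_sum]
  rw [← Finset.sum_mul]

lemma card_fun_split {M : ℕ} (x : α) :
    Fintype.card (α → Fin M) = M * Fintype.card ({j : α // j ≠ x} → Fin M) := by
  rw [Fintype.card_congr (Equiv.funSplitAt x (Fin M)), Fintype.card_prod, Fintype.card_fin]

lemma sum_apply_one' {M : ℕ} (hM : 0 < M) (x : α) (F : Fin M → ℝ) :
    ∑ g : α → Fin M, F (g x) = (Fintype.card (α → Fin M) : ℝ) / M * ∑ v, F v := by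
  rw [sum_apply_one, card_fun_split (M := M) x]
  have : (0:ℝ) < M := by exact_mod_cast hM
  push_cast
  field_simp

lemma sum_apply_two {M : ℕ} (hM : 0 < M)
    {x y : α} (hxy : x ≠ y) (F : Fin M → Fin M → ℝ) :
    ∑ g : α → Fin M, F (g x) (g y) =
      (Fintype.card (α → Fin M) : ℝ) / (M * M) * ∑ v, ∑ w, F v w := by
  classical
  rw [← Equiv.sum_comp (Equiv.funSplitAt x (Fin M)).symm (fun g => F (g x) (g y))]
  have h : ∀ p : Fin M × ({j : α // j ≠ x} → Fin M),
      F (((Equiv.funSplitAt x (Fin M)).symm p) x) (((Equiv.funSplitAt x (Fin M)).symm p) y)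
        = F p.1 (p.2 ⟨y, hxy.symm⟩) := by
    intro p
    have h1 : ((Equiv.funSplitAt x (Fin M)).symm p) x = p.1 := by
      simp [Equiv.funSplitAt, Equiv.piSplitAt]
    have h2 : ((Equiv.funSplitAt x (Fin M)).symm p) y = p.2 ⟨y, hxy.symm⟩ := by
      simp [Equiv.funSplitAt, Equiv.piSplitAt, hxy.symm]
    rw [h1, h2]
  rw [Fintype.sum_congr _ _ h, Fintype.sum_prod_type]
  have inner : ∀ v : Fin M, ∑ h : {j : α // j ≠ x} → Fin M, F v (h ⟨y, hxy.symm⟩)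
      = (Fintype.card ({j : α // j ≠ x} → Fin M) : ℝ) / M * ∑ w, F v w :=
    fun v => sum_apply_one' hM _ (fun w => F v w)
  rw [Fintype.sum_congr _ _ inner]
  rw [card_fun_split (M := M) x]
  have : (0:ℝ) < M := by exact_mod_cast hM
  push_cast
  rw [Finset.mul_sum]
  congr 1; funext v
  field_simp

lemma sum_ind_one {M : ℕ} (hM : 0 < M) (x : α) (m : Fin M) :
    ∑ g : α → Fin M, (if g x = m then (1:ℝ) else 0)
      = (Fintype.card (α → Fin M) : ℝ) / M := by
  rw [sum_apply_one' hM x (fun v => if v = m then (1:ℝ) else 0)]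
  simp

lemma sum_ind_sq {M : ℕ} (hM : 0 < M) (x : α) (m : Fin M) :
    ∑ g : α → Fin M, (if g x = m then (1:ℝ) else 0) * (if g x = m then (1:ℝ) else 0)
      = (Fintype.card (α → Fin M) : ℝ) / M := by
  have h : ∀ g : α → Fin M,
      (if g x = m then (1:ℝ) else 0) * (if g x = m then (1:ℝ) else 0)
        = (if g x = m then (1:ℝ) else 0) := fun g => by split <;> simp
  rw [Fintype.sum_congr _ _ h, sum_ind_one hM x m]

lemma sum_ind_two {M : ℕ} (hM : 0 < M) {x y : α} (hxy : x ≠ y) (m : Fin M) :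
    ∑ g : α → Fin M, (if g x = m then (1:ℝ) else 0) * (if g y = m then (1:ℝ) else 0)
      = (Fintype.card (α → Fin M) : ℝ) / (M * M) := by
  rw [sum_apply_two hM hxy (fun v w => (if v = m then (1:ℝ) else 0) * (if w = m then (1:ℝ) else 0))]
  simp

lemma sum_prod_split {A B : Type*} [Fintype A] [Fintype B] (f : A → ℝ) (g : B → ℝ) :
    ∑ b : A × B, f b.1 * g b.2 = (∑ a, f a) * (∑ b, g b) := by
  rw [Fintype.sum_prod_type]
  rw [Finset.sum_mul_sum]

lemma sum_sum_mul_const {β : Type*} (s : Finset β) (f : β → ℝ) (C : ℝ) :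
    ∑ x ∈ s, ∑ y ∈ s, (f x * f y) * C = C * (∑ x ∈ s, f x)^2 := by
  rw [sq, Finset.sum_mul_sum, Finset.mul_sum]
  refine Finset.sum_congr rfl fun x _ => ?_
  rw [Finset.mul_sum]
  exact Finset.sum_congr rfl fun y _ => by ring

/-- Abstract second-moment bound: if `P` has mean `t` and second moment at most
`t^2 + V` (under the uniform average on `B`), then the average of `|P - t|` is
at most `√V`. -/
lemma expectation_abs_dev {B : Type*} [Fintype B] (P : B → ℝ) (N t V : ℝ)
    (hN : 0 < N) (hcard : ((Fintype.card B : ℕ) : ℝ) = N)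
    (h1 : ∑ b : B, P b = N * t) (h2 : ∑ b : B, (P b)^2 ≤ N * (t^2 + V)) (hV : 0 ≤ V) :
    (1/N) * ∑ b : B, |P b - t| ≤ Real.sqrt V := by
  have hsq : ∑ b : B, (P b - t)^2 ≤ N * V := by
    have e : ∑ b : B, (P b - t)^2
        = ∑ b : B, (P b)^2 - 2*t*(∑ b : B, P b) + ((Fintype.card B : ℕ) : ℝ) * t^2 := by
      have h : ∀ b : B, (P b - t)^2 = (P b)^2 - 2*t*(P b) + t^2 := fun b => by ring
      rw [Fintype.sum_congr _ _ h, Finset.sum_add_distrib, Finset.sum_sub_distrib,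
        ← Finset.mul_sum, Finset.sum_const, Finset.card_univ, nsmul_eq_mul]
    rw [e, hcard, h1]; nlinarith [h2]
  have cs : (∑ b : B, |P b - t|)^2 ≤ N * ∑ b : B, (P b - t)^2 := by
    have h := Finset.sum_mul_sq_le_sq_mul_sq univ (fun b : B => |P b - t|) (fun _ => (1:ℝ))
    simp only [mul_one, one_pow, sq_abs, Finset.sum_const, Finset.card_univ,
      nsmul_eq_mul, mul_one] at h
    rw [hcard] at h
    nlinarith [h]
  have habs : 0 ≤ ∑ b : B, |P b - t| := Finset.sum_nonneg fun b _ => abs_nonneg _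
  have hL : 0 ≤ (1/N) * ∑ b : B, |P b - t| := by positivity
  rw [← Real.sqrt_sq hL]
  apply Real.sqrt_le_sqrt
  have hN2 : (0:ℝ) < N^2 := by positivity
  have hrw : ((1/N) * ∑ b : B, |P b - t|)^2 = (∑ b : B, |P b - t|)^2 / N^2 := by
    field_simp
  rw [hrw, div_le_iff₀ hN2]
  nlinarith [cs, hsq, hN.le]

lemma key_mc {𝒳 : Type*} [Fintype 𝒳] [DecidableEq 𝒳]
    (Mt Ct : ℕ) (hM : 0 < Mt) (hC : 0 < Ct)
    (p : 𝒳 → ℝ) (hp : ∀ x, 0 ≤ p x) (hsum : ∑ x, p x = 1)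
    (γ : ℝ) (hγ : 0 < γ) (m : Fin Mt) (c : Fin Ct) :
    (1 / (Fintype.card ((𝒳 → Fin Mt) × (𝒳 → Fin Ct)) : ℝ)) *
      ∑ b : (𝒳 → Fin Mt) × (𝒳 → Fin Ct),
        |(∑ x, p x * (if b.1 x = m then (1:ℝ) else 0) * (if b.2 x = c then (1:ℝ) else 0))
          - 1 / ((Mt : ℝ) * Ct)|
    ≤ Real.sqrt ((2:ℝ) ^ (-γ) / ((Mt:ℝ) * Ct))
      + 2 * (∑ x ∈ Finset.univ.filter (fun x => ¬ (γ < Real.logb 2 (1 / p x))), p x)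
          / ((Mt:ℝ) * Ct) := by
  classical
  have hMt : (0:ℝ) < Mt := by exact_mod_cast hM
  have hCt : (0:ℝ) < Ct := by exact_mod_cast hC
  haveI : Nonempty (Fin Mt) := ⟨⟨0, hM⟩⟩
  haveI : Nonempty (Fin Ct) := ⟨⟨0, hC⟩⟩
  have hN1 : (0:ℝ) < (Fintype.card (𝒳 → Fin Mt) : ℝ) := by exact_mod_cast Fintype.card_pos
  have hN2 : (0:ℝ) < (Fintype.card (𝒳 → Fin Ct) : ℝ) := by exact_mod_cast Fintype.card_pos
  set D : Finset 𝒳 := univ.filter (fun x => γ < Real.logb 2 (1 / p x)) with hDdef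
  set Dc : Finset 𝒳 := univ.filter (fun x => ¬ (γ < Real.logb 2 (1 / p x))) with hDcdef
  set q : ℝ := ∑ x ∈ D, p x with hqdef
  set r : ℝ := ∑ x ∈ Dc, p x with hrdef
  have hqr : q + r = 1 := by
    rw [hqdef, hrdef, hDdef, hDcdef, Finset.sum_filter_add_sum_filter_not]; exact hsum
  have hq0 : 0 ≤ q := Finset.sum_nonneg fun x _ => hp x
  have hr0 : 0 ≤ r := Finset.sum_nonneg fun x _ => hp x
  have hq1 : q ≤ 1 := by linarith
  set K : ℝ := (Mt:ℝ) * Ct with hKdef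
  have hK : 0 < K := mul_pos hMt hCt
  set N : ℝ := (Fintype.card (𝒳 → Fin Mt) : ℝ) * (Fintype.card (𝒳 → Fin Ct) : ℝ) with hNdef
  have hN : 0 < N := mul_pos hN1 hN2
  have hcardB : ((Fintype.card ((𝒳 → Fin Mt) × (𝒳 → Fin Ct)) : ℕ) : ℝ) = N := by
    rw [hNdef, Fintype.card_prod]; push_cast; ring
  -- per-element bound on D
  have hpD : ∀ x ∈ D, p x ≤ (2:ℝ) ^ (-γ) := by
    intro x hx
    rw [hDdef, Finset.mem_filter] at hx
    obtain ⟨-, hx⟩ := hx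
    by_cases h0 : p x = 0
    · simp [h0] at hx; linarith
    have hpx : 0 < p x := lt_of_le_of_ne (hp x) (Ne.symm h0)
    have h1x : (0:ℝ) < 1 / p x := by positivity
    have hlt : (2:ℝ) ^ γ < 1 / p x := (Real.lt_logb_iff_rpow_lt one_lt_two h1x).mp hx
    have h2γ : (0:ℝ) < (2:ℝ) ^ γ := Real.rpow_pos_of_pos two_pos γ
    have hmul : (2:ℝ)^γ * p x < 1 := (lt_div_iff₀ hpx).mp hlt
    rw [Real.rpow_neg (by norm_num : (0:ℝ) ≤ 2), ← one_div, le_div_iff₀ h2γ]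
    nlinarith
  have hS2 : ∑ x ∈ D, (p x)^2 ≤ (2:ℝ)^(-γ) * q := by
    rw [hqdef, Finset.mul_sum]
    refine Finset.sum_le_sum fun x hx => ?_
    have := hpD x hx
    have := hp x
    nlinarith
  have h2γ0 : (0:ℝ) ≤ (2:ℝ)^(-γ) := (Real.rpow_pos_of_pos two_pos _).le
  have hS20 : (0:ℝ) ≤ ∑ x ∈ D, (p x)^2 := Finset.sum_nonneg fun x _ => sq_nonneg _
  -- mean computation for any subset S
  have hmean : ∀ S : Finset 𝒳, ∑ b : (𝒳 → Fin Mt) × (𝒳 → Fin Ct),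
      ∑ x ∈ S, p x * (if b.1 x = m then (1:ℝ) else 0) * (if b.2 x = c then (1:ℝ) else 0)
      = N / K * ∑ x ∈ S, p x := by
    intro S
    rw [Finset.sum_comm]
    have hx : ∀ x : 𝒳, ∑ b : (𝒳 → Fin Mt) × (𝒳 → Fin Ct),
        p x * (if b.1 x = m then (1:ℝ) else 0) * (if b.2 x = c then (1:ℝ) else 0)
        = p x * (N / K) := by
      intro x
      have h : ∀ b : (𝒳 → Fin Mt) × (𝒳 → Fin Ct),
          p x * (if b.1 x = m then (1:ℝ) else 0) * (if b.2 x = c then (1:ℝ) else 0)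
          = p x * ((if b.1 x = m then (1:ℝ) else 0) * (if b.2 x = c then (1:ℝ) else 0)) :=
        fun b => by ring
      rw [Fintype.sum_congr _ _ h, ← Finset.mul_sum,
        sum_prod_split (fun g1 : 𝒳 → Fin Mt => if g1 x = m then (1:ℝ) else 0)
          (fun g2 : 𝒳 → Fin Ct => if g2 x = c then (1:ℝ) else 0),
        sum_ind_one hM x m, sum_ind_one hC x c, hNdef, hKdef, div_mul_div_comm]
    rw [Finset.sum_congr rfl fun x _ => hx x, ← Finset.sum_mul, mul_comm]
  -- second moment over D
  have hsq : ∑ b : (𝒳 → Fin Mt) × (𝒳 → Fin Ct),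
      (∑ x ∈ D, p x * (if b.1 x = m then (1:ℝ) else 0) * (if b.2 x = c then (1:ℝ) else 0))^2
      = N/(K*K) * q^2 + (N/K - N/(K*K)) * ∑ x ∈ D, (p x)^2 := by
    have expand : ∀ b : (𝒳 → Fin Mt) × (𝒳 → Fin Ct),
        (∑ x ∈ D, p x * (if b.1 x = m then (1:ℝ) else 0) * (if b.2 x = c then (1:ℝ) else 0))^2
        = ∑ x ∈ D, ∑ y ∈ D, (p x * p y) *
            (((if b.1 x = m then (1:ℝ) else 0) * (if b.1 y = m then (1:ℝ) else 0)) *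
             ((if b.2 x = c then (1:ℝ) else 0) * (if b.2 y = c then (1:ℝ) else 0))) := by
      intro b
      rw [sq, Finset.sum_mul_sum]
      exact Finset.sum_congr rfl fun x _ => Finset.sum_congr rfl fun y _ => by ring
    rw [Fintype.sum_congr _ _ expand, Finset.sum_comm]
    have hswap : ∀ x ∈ D, ∑ b : (𝒳 → Fin Mt) × (𝒳 → Fin Ct), ∑ y ∈ D, (p x * p y) *
            (((if b.1 x = m then (1:ℝ) else 0) * (if b.1 y = m then (1:ℝ) else 0)) *
             ((if b.2 x = c then (1:ℝ) else 0) * (if b.2 y = c then (1:ℝ) else 0)))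
        = ∑ y ∈ D, (p x * p y) * (if x = y then N/K else N/(K*K)) := by
      intro x _
      rw [Finset.sum_comm]
      refine Finset.sum_congr rfl fun y _ => ?_
      rw [← Finset.mul_sum]
      congr 1
      rw [sum_prod_split
        (fun g1 : 𝒳 → Fin Mt => (if g1 x = m then (1:ℝ) else 0) * (if g1 y = m then (1:ℝ) else 0))
        (fun g2 : 𝒳 → Fin Ct => (if g2 x = c then (1:ℝ) else 0) * (if g2 y = c then (1:ℝ) else 0))]
      by_cases hxy : x = y
      · subst hxy
        rw [if_pos rfl, sum_ind_sq hM x m, sum_ind_sq hC x c, hNdef, hKdef, div_mul_div_comm]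
      · rw [if_neg hxy, sum_ind_two hM hxy m, sum_ind_two hC hxy c, hNdef, hKdef,
          div_mul_div_comm]
        ring
    rw [Finset.sum_congr rfl hswap]
    -- now a pure Finset computation
    have h1 : ∀ x ∈ D, ∑ y ∈ D, (p x * p y) * (if x = y then N/K else N/(K*K))
        = (∑ y ∈ D, (p x * p y) * (N/(K*K))) + (p x * p x) * (N/K - N/(K*K)) := by
      intro x hx
      have h : ∀ y ∈ D, (p x * p y) * (if x = y then N/K else N/(K*K))
          = (p x * p y) * (N/(K*K))
            + (if x = y then (p x * p y) * (N/K - N/(K*K)) else 0) := by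
        intro y _; by_cases h : x = y <;> simp [h] <;> ring
      rw [Finset.sum_congr rfl h, Finset.sum_add_distrib,
        Finset.sum_ite_eq D x (fun y => (p x * p y) * (N/K - N/(K*K))), if_pos hx]
    rw [Finset.sum_congr rfl h1, Finset.sum_add_distrib,
      sum_sum_mul_const D p (N/(K*K)), ← hqdef]
    have h3 : ∑ x ∈ D, (p x * p x) * (N/K - N/(K*K))
        = (N/K - N/(K*K)) * ∑ x ∈ D, (p x)^2 := by
      rw [Finset.mul_sum]
      exact Finset.sum_congr rfl fun x _ => by ring
    rw [h3]
  -- triangle inequality pointwise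
  have hP2nn : ∀ b : (𝒳 → Fin Mt) × (𝒳 → Fin Ct),
      0 ≤ ∑ x ∈ Dc, p x * (if b.1 x = m then (1:ℝ) else 0) * (if b.2 x = c then (1:ℝ) else 0) := by
    intro b
    refine Finset.sum_nonneg fun x _ => ?_
    have h1 : (0:ℝ) ≤ if b.1 x = m then (1:ℝ) else 0 := by split <;> norm_num
    have h2 : (0:ℝ) ≤ if b.2 x = c then (1:ℝ) else 0 := by split <;> norm_num
    exact mul_nonneg (mul_nonneg (hp x) h1) h2
  have htri : ∀ b : (𝒳 → Fin Mt) × (𝒳 → Fin Ct),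
      |(∑ x, p x * (if b.1 x = m then (1:ℝ) else 0) * (if b.2 x = c then (1:ℝ) else 0)) - 1/K|
      ≤ |(∑ x ∈ D, p x * (if b.1 x = m then (1:ℝ) else 0) * (if b.2 x = c then (1:ℝ) else 0)) - q/K|
        + ((∑ x ∈ Dc, p x * (if b.1 x = m then (1:ℝ) else 0) * (if b.2 x = c then (1:ℝ) else 0)) + r/K) := by
    intro b
    have hsplitb : (∑ x, p x * (if b.1 x = m then (1:ℝ) else 0) * (if b.2 x = c then (1:ℝ) else 0))
        = (∑ x ∈ D, p x * (if b.1 x = m then (1:ℝ) else 0) * (if b.2 x = c then (1:ℝ) else 0))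
          + (∑ x ∈ Dc, p x * (if b.1 x = m then (1:ℝ) else 0) * (if b.2 x = c then (1:ℝ) else 0)) := by
      rw [hDdef, hDcdef, Finset.sum_filter_add_sum_filter_not]
    have hK1 : q/K + r/K = 1/K := by rw [← add_div, hqr]
    have hrk : 0 ≤ r/K := div_nonneg hr0 hK.le
    have hd : (∑ x, p x * (if b.1 x = m then (1:ℝ) else 0) * (if b.2 x = c then (1:ℝ) else 0)) - 1/K
        = ((∑ x ∈ D, p x * (if b.1 x = m then (1:ℝ) else 0) * (if b.2 x = c then (1:ℝ) else 0)) - q/K)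
          + ((∑ x ∈ Dc, p x * (if b.1 x = m then (1:ℝ) else 0) * (if b.2 x = c then (1:ℝ) else 0)) - r/K) := by
      rw [hsplitb, ← hK1]; ring
    rw [hd]
    refine (abs_add_le _ _).trans ?_
    gcongr
    calc |(∑ x ∈ Dc, p x * (if b.1 x = m then (1:ℝ) else 0) * (if b.2 x = c then (1:ℝ) else 0)) - r/K|
        ≤ |(∑ x ∈ Dc, p x * (if b.1 x = m then (1:ℝ) else 0) * (if b.2 x = c then (1:ℝ) else 0))| + |r/K| :=
          abs_sub _ _
      _ = (∑ x ∈ Dc, p x * (if b.1 x = m then (1:ℝ) else 0) * (if b.2 x = c then (1:ℝ) else 0)) + r/K := by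
          rw [abs_of_nonneg (hP2nn b), abs_of_nonneg hrk]
  -- the deviation bound for P1
  have hdev : (1/N) * ∑ b : (𝒳 → Fin Mt) × (𝒳 → Fin Ct),
      |(∑ x ∈ D, p x * (if b.1 x = m then (1:ℝ) else 0) * (if b.2 x = c then (1:ℝ) else 0)) - q/K|
      ≤ Real.sqrt ((2:ℝ)^(-γ) / K) := by
    have hVnn : (0:ℝ) ≤ (2:ℝ)^(-γ) / K := div_nonneg h2γ0 hK.le
    refine expectation_abs_dev
      (fun b : (𝒳 → Fin Mt) × (𝒳 → Fin Ct) => ∑ x ∈ D, p x * (if b.1 x = m then (1:ℝ) else 0) * (if b.2 x = c then (1:ℝ) else 0))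
      N (q/K) ((2:ℝ)^(-γ)/K) hN hcardB ?_ ?_ hVnn
    · rw [hmean D, ← hqdef]; ring
    · rw [hsq]
      have hAnn : (0:ℝ) ≤ N/K := div_nonneg hN.le hK.le
      have hBnn : (0:ℝ) ≤ N/(K*K) := div_nonneg hN.le (mul_nonneg hK.le hK.le)
      have hstep : (N/K - N/(K*K)) * ∑ x ∈ D, (p x)^2 ≤ (N/K) * ((2:ℝ)^(-γ)) := by
        have e1 : (N/K - N/(K*K)) * ∑ x ∈ D, (p x)^2 ≤ (N/K) * ∑ x ∈ D, (p x)^2 := by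
          nlinarith
        have e2 : (N/K) * ∑ x ∈ D, (p x)^2 ≤ (N/K) * ((2:ℝ)^(-γ)) := by
          refine mul_le_mul_of_nonneg_left ?_ hAnn
          nlinarith
        linarith
      have e3 : N/(K*K) * q^2 = N * ((q/K)^2) := by ring
      have e4 : (N/K) * ((2:ℝ)^(-γ)) = N * ((2:ℝ)^(-γ)/K) := by ring
      nlinarith [hstep]
  -- assemble
  rw [hcardB]
  have hsumtri : ∑ b : (𝒳 → Fin Mt) × (𝒳 → Fin Ct),
      |(∑ x, p x * (if b.1 x = m then (1:ℝ) else 0) * (if b.2 x = c then (1:ℝ) else 0)) - 1/K|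
      ≤ (∑ b : (𝒳 → Fin Mt) × (𝒳 → Fin Ct),
          |(∑ x ∈ D, p x * (if b.1 x = m then (1:ℝ) else 0) * (if b.2 x = c then (1:ℝ) else 0)) - q/K|)
        + (N/K * r + N * (r/K)) := by
    calc ∑ b : (𝒳 → Fin Mt) × (𝒳 → Fin Ct),
        |(∑ x, p x * (if b.1 x = m then (1:ℝ) else 0) * (if b.2 x = c then (1:ℝ) else 0)) - 1/K|
        ≤ ∑ b : (𝒳 → Fin Mt) × (𝒳 → Fin Ct),
            (|(∑ x ∈ D, p x * (if b.1 x = m then (1:ℝ) else 0) * (if b.2 x = c then (1:ℝ) else 0)) - q/K|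
              + ((∑ x ∈ Dc, p x * (if b.1 x = m then (1:ℝ) else 0) * (if b.2 x = c then (1:ℝ) else 0)) + r/K)) :=
          Finset.sum_le_sum fun b _ => htri b
      _ = (∑ b : (𝒳 → Fin Mt) × (𝒳 → Fin Ct),
            |(∑ x ∈ D, p x * (if b.1 x = m then (1:ℝ) else 0) * (if b.2 x = c then (1:ℝ) else 0)) - q/K|)
          + ((∑ b : (𝒳 → Fin Mt) × (𝒳 → Fin Ct),
              ∑ x ∈ Dc, p x * (if b.1 x = m then (1:ℝ) else 0) * (if b.2 x = c then (1:ℝ) else 0))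
            + ((Fintype.card ((𝒳 → Fin Mt) × (𝒳 → Fin Ct)) : ℕ) : ℝ) * (r/K)) := by
          rw [Finset.sum_add_distrib, Finset.sum_add_distrib, Finset.sum_const,
            Finset.card_univ, nsmul_eq_mul]
      _ = (∑ b : (𝒳 → Fin Mt) × (𝒳 → Fin Ct),
            |(∑ x ∈ D, p x * (if b.1 x = m then (1:ℝ) else 0) * (if b.2 x = c then (1:ℝ) else 0)) - q/K|)
          + (N/K * r + N * (r/K)) := by
          rw [hmean Dc, ← hrdef, hcardB]
  have hfinal : (1/N) * ∑ b : (𝒳 → Fin Mt) × (𝒳 → Fin Ct),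
      |(∑ x, p x * (if b.1 x = m then (1:ℝ) else 0) * (if b.2 x = c then (1:ℝ) else 0)) - 1/K|
      ≤ Real.sqrt ((2:ℝ)^(-γ) / K) + 2 * r / K := by
    have hmono := mul_le_mul_of_nonneg_left hsumtri (le_of_lt (by positivity : (0:ℝ) < 1/N))
    have hcollect : (1/N) * ((∑ b : (𝒳 → Fin Mt) × (𝒳 → Fin Ct),
          |(∑ x ∈ D, p x * (if b.1 x = m then (1:ℝ) else 0) * (if b.2 x = c then (1:ℝ) else 0)) - q/K|)
        + (N/K * r + N * (r/K)))
        = (1/N) * (∑ b : (𝒳 → Fin Mt) × (𝒳 → Fin Ct),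
            |(∑ x ∈ D, p x * (if b.1 x = m then (1:ℝ) else 0) * (if b.2 x = c then (1:ℝ) else 0)) - q/K|)
          + 2 * r / K := by
      rw [mul_add]
      congr 1
      field_simp
      ring
    rw [hcollect] at hmono
    have := hdev
    linarith
  exact hfinal

end Helpers

/-- One-shot binning lemma: the expected (over uniform independent random binning)
total variation distance between the induced bin-index distribution `P_MC` and the
product of uniform distributions is at most
`P(X ∉ D_γ) + (1/2) √(M̃ C̃ 2^{-γ})`, where `D_γ = {x : log₂(1/p_X(x)) > γ}`. -/
theorem one_shot_binning_tv {𝒳 : Type*} [Fintype 𝒳] [DecidableEq 𝒳]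
    (Mt Ct : ℕ) (hM : 0 < Mt) (hC : 0 < Ct)
    (p : 𝒳 → ℝ) (hp : ∀ x, 0 ≤ p x) (hsum : ∑ x, p x = 1)
    (γ : ℝ) (hγ : 0 < γ) :
    (1 / (Fintype.card ((𝒳 → Fin Mt) × (𝒳 → Fin Ct)) : ℝ)) *
      ∑ b : (𝒳 → Fin Mt) × (𝒳 → Fin Ct),
        ((1/2) * ∑ m : Fin Mt, ∑ c : Fin Ct,
          |(∑ x, p x * (if b.1 x = m then (1:ℝ) else 0) * (if b.2 x = c then (1:ℝ) else 0))
            - 1 / ((Mt : ℝ) * Ct)|)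
    ≤ (∑ x ∈ Finset.univ.filter (fun x => ¬ (γ < Real.logb 2 (1 / p x))), p x)
      + (1/2) * Real.sqrt ((Mt : ℝ) * Ct * (2:ℝ) ^ (-γ)) := by
  classical
  have hMt : (0:ℝ) < Mt := by exact_mod_cast hM
  have hCt : (0:ℝ) < Ct := by exact_mod_cast hC
  set K : ℝ := (Mt:ℝ) * Ct with hKdef
  have hK : 0 < K := mul_pos hMt hCt
  set r : ℝ := ∑ x ∈ Finset.univ.filter (fun x => ¬ (γ < Real.logb 2 (1 / p x))), p x with hrdef
  set cB : ℝ := (Fintype.card ((𝒳 → Fin Mt) × (𝒳 → Fin Ct)) : ℝ) with hcBdef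
  have hkey : ∀ (m : Fin Mt) (c : Fin Ct),
      (1/cB) * ∑ b : (𝒳 → Fin Mt) × (𝒳 → Fin Ct),
        |(∑ x, p x * (if b.1 x = m then (1:ℝ) else 0) * (if b.2 x = c then (1:ℝ) else 0)) - 1/K|
      ≤ Real.sqrt ((2:ℝ)^(-γ) / K) + 2 * r / K := by
    intro m c
    have h := key_mc Mt Ct hM hC p hp hsum γ hγ m c
    rw [hcBdef, hKdef, hrdef]
    exact h
  have hswap : (1/cB) * ∑ b : (𝒳 → Fin Mt) × (𝒳 → Fin Ct),
      ((1/2) * ∑ m : Fin Mt, ∑ c : Fin Ct,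
        |(∑ x, p x * (if b.1 x = m then (1:ℝ) else 0) * (if b.2 x = c then (1:ℝ) else 0)) - 1/K|)
      = (1/2) * ∑ m : Fin Mt, ∑ c : Fin Ct, ((1/cB) *
          ∑ b : (𝒳 → Fin Mt) × (𝒳 → Fin Ct),
            |(∑ x, p x * (if b.1 x = m then (1:ℝ) else 0) * (if b.2 x = c then (1:ℝ) else 0)) - 1/K|) := by
    rw [← Finset.mul_sum]
    have hcomm : ∑ b : (𝒳 → Fin Mt) × (𝒳 → Fin Ct), ∑ m : Fin Mt, ∑ c : Fin Ct,
        |(∑ x, p x * (if b.1 x = m then (1:ℝ) else 0) * (if b.2 x = c then (1:ℝ) else 0)) - 1/K|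
        = ∑ m : Fin Mt, ∑ c : Fin Ct, ∑ b : (𝒳 → Fin Mt) × (𝒳 → Fin Ct),
            |(∑ x, p x * (if b.1 x = m then (1:ℝ) else 0) * (if b.2 x = c then (1:ℝ) else 0)) - 1/K| := by
      rw [Finset.sum_comm]
      exact Finset.sum_congr rfl fun m _ => Finset.sum_comm
    rw [hcomm, ← mul_assoc, mul_comm (1/cB) ((1:ℝ)/2), mul_assoc]
    congr 1
    rw [Finset.mul_sum]
    refine Finset.sum_congr rfl fun m _ => ?_
    rw [Finset.mul_sum]
  have hconst : ∑ m : Fin Mt, ∑ c : Fin Ct, (Real.sqrt ((2:ℝ)^(-γ) / K) + 2 * r / K)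
      = K * (Real.sqrt ((2:ℝ)^(-γ) / K) + 2 * r / K) := by
    simp [Finset.sum_const, Finset.card_univ, hKdef]
    ring
  have hKs : K * Real.sqrt ((2:ℝ)^(-γ) / K) = Real.sqrt (K * (2:ℝ)^(-γ)) := by
    have h2γ0 : (0:ℝ) ≤ (2:ℝ)^(-γ) := (Real.rpow_pos_of_pos two_pos _).le
    have h1 : (2:ℝ)^(-γ)/K = (K * (2:ℝ)^(-γ))/K^2 := by
      field_simp
    rw [h1, Real.sqrt_div (by positivity), Real.sqrt_sq hK.le]
    field_simp
  rw [hswap]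
  have hsum2 : ∑ m : Fin Mt, ∑ c : Fin Ct, ((1/cB) *
        ∑ b : (𝒳 → Fin Mt) × (𝒳 → Fin Ct),
          |(∑ x, p x * (if b.1 x = m then (1:ℝ) else 0) * (if b.2 x = c then (1:ℝ) else 0)) - 1/K|)
      ≤ ∑ m : Fin Mt, ∑ c : Fin Ct, (Real.sqrt ((2:ℝ)^(-γ) / K) + 2 * r / K) :=
    Finset.sum_le_sum fun m _ => Finset.sum_le_sum fun c _ => hkey m c
  calc (1/2) * ∑ m : Fin Mt, ∑ c : Fin Ct, ((1/cB) *
        ∑ b : (𝒳 → Fin Mt) × (𝒳 → Fin Ct),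
          |(∑ x, p x * (if b.1 x = m then (1:ℝ) else 0) * (if b.2 x = c then (1:ℝ) else 0)) - 1/K|)
      ≤ (1/2) * ∑ m : Fin Mt, ∑ c : Fin Ct, (Real.sqrt ((2:ℝ)^(-γ) / K) + 2 * r / K) := by
        linarith [hsum2]
    _ = (1/2) * (K * (Real.sqrt ((2:ℝ)^(-γ) / K) + 2 * r / K)) := by rw [hconst]
    _ = r + (1/2) * Real.sqrt (K * (2:ℝ)^(-γ)) := by
        rw [mul_add K, hKs]
        field_simp
        ring
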